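/- Let S(α) = Σ_{i=1}^∞ X_i be a random walk where each X_i independently equals α > 1 with probability 1−p and −1 with probability p, started from initial value cα for a positive number c. Then the probability that the walk ever goes below zero is at most (p^α/(1−p)^2)^c. -/

import Mathlib

section Aux

open Set

lemma key_ineq {p α : ℝ} (hp : 0 < p) (hp1 : p < 1) (hα : 1 < α)
    (h : p ^ α ≤ (1 - p) ^ 2) :
    (1 - p) ^ (2 / α) + p ^ α / (1 - p) ≤ 1 := by
  have hα0 : (0:ℝ) < α := by linarith
  have hαne : α ≠ 0 := ne_of_gt hα0
  have hq0 : (0:ℝ) < 1 - p := by linarith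
  have hβ0 : (0:ℝ) < 2 / α := by positivity
  set G : ℝ → ℝ := fun t => ((1 - t) ^ ((1:ℝ) + 2 / α) + t ^ α) + (t + (-1)) with hG
  have hconv : ConvexOn ℝ (Icc (0:ℝ) 1) G := by
    have hA : ∃ A : ℝ →ᵃ[ℝ] ℝ, ∀ t, A t = 1 - t := by
      refine ⟨AffineMap.mk (fun t => 1 - t) (-LinearMap.id) ?_, fun t => rfl⟩
      intro pt v
      show 1 - (v + pt) = -v + (1 - pt)
      ring
    obtain ⟨A, hAapp⟩ := hA
    have h1 : ConvexOn ℝ (A ⁻¹' Ici (0:ℝ)) (fun t => (A t) ^ ((1:ℝ) + 2 / α)) :=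
      (convexOn_rpow (by linarith : (1:ℝ) ≤ 1 + 2 / α)).comp_affineMap A
    have h1' : ConvexOn ℝ (Icc (0:ℝ) 1) (fun t : ℝ => (1 - t) ^ ((1:ℝ) + 2 / α)) := by
      have hsub : Icc (0:ℝ) 1 ⊆ A ⁻¹' Ici (0:ℝ) := by
        intro t ht
        have := (mem_Icc.1 ht).2
        simp only [Set.mem_preimage, hAapp, mem_Ici]
        linarith
      have := h1.subset hsub (convex_Icc 0 1)
      simpa only [hAapp] using this
    have h2 : ConvexOn ℝ (Icc (0:ℝ) 1) (fun t : ℝ => t ^ α) :=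
      (convexOn_rpow (le_of_lt hα)).subset (fun t ht => (mem_Icc.1 ht).1) (convex_Icc 0 1)
    have h3 : ConvexOn ℝ (Icc (0:ℝ) 1) (fun t : ℝ => t + (-1)) :=
      (convexOn_id (convex_Icc 0 1)).add_const (-1)
    exact (h1'.add h2).add h3
  have hcont : Continuous fun t : ℝ => t - (1 - t) ^ (2 / α) := by
    have hc2 : Continuous fun x : ℝ => x ^ (2 / α) := by
      rw [continuous_iff_continuousAt]
      exact fun x => Real.continuousAt_rpow_const x _ (Or.inr hβ0.le)
    exact continuous_id.sub (hc2.comp (continuous_const.sub continuous_id))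
  have hIVT := intermediate_value_Icc (zero_le_one (α := ℝ)) hcont.continuousOn
  have h0mem : (0:ℝ) ∈ Icc ((fun t : ℝ => t - (1 - t) ^ (2 / α)) 0)
      ((fun t : ℝ => t - (1 - t) ^ (2 / α)) 1) := by
    constructor <;> simp [Real.zero_rpow (ne_of_gt hβ0), Real.one_rpow]
  obtain ⟨p₀, hp₀mem, hp₀⟩ := hIVT h0mem
  have hp₀eq : p₀ = (1 - p₀) ^ (2 / α) := by
    have : p₀ - (1 - p₀) ^ (2 / α) = 0 := hp₀
    linarith
  have hq₀0 : (0:ℝ) ≤ 1 - p₀ := by linarith [hp₀mem.2]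
  have hpq : p ≤ (1 - p) ^ (2 / α) := by
    have h' := Real.rpow_le_rpow (by positivity) h (by positivity : (0:ℝ) ≤ 1 / α)
    rw [← Real.rpow_natCast (1 - p) 2, ← Real.rpow_mul hp.le, ← Real.rpow_mul hq0.le,
      mul_one_div, div_self hαne, Real.rpow_one] at h'
    push_cast at h'
    rwa [mul_one_div] at h'
  have hple : p ≤ p₀ := by
    by_contra hcon
    push_neg at hcon
    have hmono : (1 - p) ^ (2 / α) ≤ (1 - p₀) ^ (2 / α) :=
      Real.rpow_le_rpow hq0.le (by linarith) hβ0.le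
    rw [← hp₀eq] at hmono
    linarith [hpq.trans hmono]
  have hp₀α : p₀ ^ α = (1 - p₀) ^ 2 := by
    calc p₀ ^ α = ((1 - p₀) ^ (2 / α)) ^ α := by rw [← hp₀eq]
      _ = (1 - p₀) ^ ((2 / α) * α) := (Real.rpow_mul hq₀0 _ _).symm
      _ = (1 - p₀) ^ ((2:ℝ)) := by rw [div_mul_cancel₀ _ hαne]
      _ = (1 - p₀) ^ 2 := by rw [← Real.rpow_natCast (1 - p₀) 2]; norm_num
  have hGp₀ : G p₀ = 0 := by
    have hsplit : (1 - p₀) ^ ((1:ℝ) + 2 / α) = (1 - p₀) ^ (1:ℝ) * (1 - p₀) ^ (2 / α) :=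
      Real.rpow_add' hq₀0 (by positivity)
    simp only [hG]
    rw [hsplit, Real.rpow_one, ← hp₀eq, hp₀α]
    ring
  have hG0 : G 0 = 0 := by
    simp only [hG]
    rw [sub_zero, Real.one_rpow, Real.zero_rpow hαne]
    ring
  have hGple : G p ≤ 0 := by
    have hseg : p ∈ segment ℝ (0:ℝ) p₀ := by
      rw [segment_eq_Icc (by linarith [hp₀mem.1] : (0:ℝ) ≤ p₀)]
      exact ⟨hp.le, hple⟩
    have := hconv.le_on_segment (left_mem_Icc.2 (by linarith [hp₀mem.2])) hp₀mem hseg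
    rw [hG0, hGp₀] at this
    simpa using this
  -- conclude
  have hsplit : (1 - p) ^ ((1:ℝ) + 2 / α) = (1 - p) * (1 - p) ^ (2 / α) := by
    rw [Real.rpow_add' hq0.le (by positivity), Real.rpow_one]
  have h2 : (1 - p) * (1 - p) ^ (2 / α) + p ^ α ≤ 1 - p := by
    simp only [hG] at hGple
    rw [hsplit] at hGple
    linarith
  calc (1 - p) ^ (2 / α) + p ^ α / (1 - p)
      = ((1 - p) * (1 - p) ^ (2 / α) + p ^ α) / (1 - p) := by field_simp
    _ ≤ (1 - p) / (1 - p) := by gcongr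
    _ = 1 := div_self (ne_of_gt hq0)

end Aux

open MeasureTheory ProbabilityTheory Finset

lemma ville_aux {Ω : Type*} {m0 : MeasurableSpace Ω} {μ : Measure Ω} [IsFiniteMeasure μ]
    {F : Filtration ℕ m0} {M : ℕ → Ω → ℝ} (hM : Supermartingale M F μ)
    (hpos : ∀ n ω, 0 ≤ M n ω) {e : ℝ} (he : 0 < e) (n : ℕ) :
    e * (μ {ω | e ≤ (range (n + 1)).sup' nonempty_range_add_one fun k => M k ω}).toReal
      ≤ ∫ ω, M 0 ω ∂μ := by
  set s := {ω | e ≤ (range (n + 1)).sup' nonempty_range_add_one fun k => M k ω} with hs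
  have hmeas_s : MeasurableSet s :=
    measurableSet_le measurable_const
      (Finset.measurable_range_sup'' fun k _ => (hM.stronglyMeasurable k).measurable.le (F.le k))
  set τ := fun ω => (((hittingBtwn M (Set.Ici e) 0 n ω : ℕ)) : WithTop ℕ) with hτdef
  have hτ : IsStoppingTime F τ := hM.stronglyAdapted.adapted.isStoppingTime_hittingBtwn measurableSet_Ici
  have hτ_le : ∀ ω, τ ω ≤ n := fun ω => WithTop.coe_le_coe.2 (hittingBtwn_le ω)
  have hint : Integrable (stoppedValue M τ) μ := by
    have h1 := (hM.neg.integrable_stoppedValue hτ hτ_le).neg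
    have : (-(stoppedValue (-M) τ)) = stoppedValue M τ := by
      funext ω; simp [stoppedValue]
    rwa [this] at h1
  have hsv_ge : ∀ ω ∈ s, e ≤ stoppedValue M τ ω := by
    intro ω hω
    rw [hs, Set.mem_setOf_eq, Finset.le_sup'_iff] at hω
    obtain ⟨k, hk, hke⟩ := hω
    refine stoppedValue_hittingBtwn_mem ?_
    exact ⟨k, ⟨Nat.zero_le _, Nat.lt_succ_iff.1 (Finset.mem_range.1 hk)⟩, hke⟩
  calc e * (μ s).toReal
      ≤ ∫ ω in s, stoppedValue M τ ω ∂μ :=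
        setIntegral_ge_of_const_le_real hmeas_s (measure_ne_top μ s) hsv_ge hint.integrableOn
    _ ≤ ∫ ω, stoppedValue M τ ω ∂μ :=
        setIntegral_le_integral hint (Filter.Eventually.of_forall fun ω => hpos _ ω)
    _ ≤ ∫ ω, M 0 ω ∂μ := by
        have h := hM.neg.expected_stoppedValue_mono (isStoppingTime_const F 0) hτ
          (fun ω => WithTop.coe_le_coe.2 (Nat.zero_le _)) hτ_le
        rw [stoppedValue_const] at h
        have h1 : ∫ ω, stoppedValue (-M) τ ω ∂μ = -∫ ω, stoppedValue M τ ω ∂μ := by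
          rw [← integral_neg]
          rfl
        have h2 : ∫ ω, (-M) 0 ω ∂μ = -∫ ω, M 0 ω ∂μ := by
          rw [← integral_neg]; congr 1
        change ∫ ω, (-M) 0 ω ∂μ ≤ ∫ ω, stoppedValue (-M) τ ω ∂μ at h
        rw [h1, h2] at h
        linarith

/-- A random walk with i.i.d. steps equal to `α > 1` with probability `1 - p`
and `-1` with probability `p`, started from `c * α` with `c > 0`, goes below zero with
probability at most `(p ^ α / (1 - p) ^ 2) ^ c`. -/
theorem stmt0 {Ω : Type*} [MeasurableSpace Ω] (μ : Measure Ω) [IsProbabilityMeasure μ]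
    (p α c : ℝ) (hp : 0 < p) (hp1 : p < 1) (hα : 1 < α) (hc : 0 < c)
    (X : ℕ → Ω → ℝ) (hmeas : ∀ i, Measurable (X i))
    (hindep : iIndepFun X μ)
    (hup : ∀ i, μ (X i ⁻¹' {α}) = ENNReal.ofReal (1 - p))
    (hdown : ∀ i, μ (X i ⁻¹' {-1}) = ENNReal.ofReal p) :
    μ {ω | ∃ t : ℕ, c * α + ∑ i ∈ range t, X i ω < 0}
      ≤ ENNReal.ofReal ((p ^ α / (1 - p) ^ 2) ^ c) := by
  have hα0 : (0:ℝ) < α := by linarith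
  have hαne : α ≠ 0 := ne_of_gt hα0
  have hq0 : (0:ℝ) < 1 - p := by linarith
  rcases le_or_gt 1 (p ^ α / (1 - p) ^ 2) with hcase | hcase
  · -- trivial case: the bound is at least one
    calc μ {ω | ∃ t : ℕ, c * α + ∑ i ∈ range t, X i ω < 0} ≤ 1 := prob_le_one
      _ ≤ ENNReal.ofReal ((p ^ α / (1 - p) ^ 2) ^ c) := by
          rw [← ENNReal.ofReal_one]
          exact ENNReal.ofReal_le_ofReal (Real.one_le_rpow hcase hc.le)
  · -- main case
    have hplt : p ^ α < (1 - p) ^ 2 := by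
      rwa [div_lt_one (by positivity)] at hcase
    set r : ℝ := p / (1 - p) ^ (2 / α) with hrdef
    have hrbase : (0:ℝ) < (1 - p) ^ (2 / α) := Real.rpow_pos_of_pos hq0 _
    have hr0 : 0 < r := div_pos hp hrbase
    have hpq : p < (1 - p) ^ (2 / α) := by
      have h' := Real.rpow_lt_rpow (by positivity) hplt (by positivity : (0:ℝ) < 1 / α)
      rw [← Real.rpow_natCast (1 - p) 2, ← Real.rpow_mul hp.le, ← Real.rpow_mul hq0.le,
        mul_one_div, div_self hαne, Real.rpow_one] at h'
      push_cast at h'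
      rwa [mul_one_div] at h'
    have hr1 : r < 1 := (div_lt_one hrbase).2 hpq
    set L : ℝ := Real.log r with hLdef
    have hL : L < 0 := Real.log_neg hr0 hr1
    have hrexp : ∀ x : ℝ, r ^ x = Real.exp (L * x) := fun x => by
      rw [Real.rpow_def_of_pos hr0]
    have hrα : r ^ α = p ^ α / (1 - p) ^ 2 := by
      rw [hrdef, Real.div_rpow hp.le hrbase.le, ← Real.rpow_mul hq0.le,
        div_mul_cancel₀ _ hαne, ← Real.rpow_natCast (1 - p) 2]
      norm_num
    -- the one-step factor has integral at most one
    have hstep_le : (1 - p) * Real.exp (L * α) + p * Real.exp (L * (-1)) ≤ 1 := by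
      have h1 : Real.exp (L * α) = r ^ α := (hrexp α).symm
      have h2 : Real.exp (L * (-1)) = r ^ (-1 : ℝ) := (hrexp (-1)).symm
      rw [h1, h2, hrα, Real.rpow_neg_one, hrdef]
      have hinv : (p / (1 - p) ^ (2 / α))⁻¹ = (1 - p) ^ (2 / α) / p := by
        rw [inv_div]
      rw [hinv]
      have hkey := key_ineq hp hp1 hα hplt.le
      have e1 : (1 - p) * (p ^ α / (1 - p) ^ 2) = p ^ α / (1 - p) := by
        field_simp
      have e2 : p * ((1 - p) ^ (2 / α) / p) = (1 - p) ^ (2 / α) := by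
        field_simp
      rw [e1, e2]
      linarith
    -- a.e. two-valuedness
    have hdisj : Disjoint ({α} : Set ℝ) {-1} := by
      simp only [Set.disjoint_singleton]
      intro hcon
      rw [hcon] at hα
      linarith
    have hXae : ∀ i, ∀ᵐ ω ∂μ, X i ω = α ∨ X i ω = -1 := by
      intro i
      have hu : μ (X i ⁻¹' {α} ∪ X i ⁻¹' {-1}) = 1 := by
        rw [measure_union (hdisj.preimage _) ((hmeas i) (measurableSet_singleton _)),
          hup, hdown, ← ENNReal.ofReal_add (by linarith) hp.le]
        norm_num
      have hc0 : μ (X i ⁻¹' {α} ∪ X i ⁻¹' {-1})ᶜ = 0 := by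
        rw [measure_compl (((hmeas i) (measurableSet_singleton _)).union
          ((hmeas i) (measurableSet_singleton _))) (measure_ne_top _ _), hu, measure_univ,
          tsub_self]
      rw [ae_iff]
      have hset : {ω | ¬(X i ω = α ∨ X i ω = -1)} = (X i ⁻¹' {α} ∪ X i ⁻¹' {-1})ᶜ := by
        ext ω
        simp only [Set.mem_setOf_eq, Set.mem_compl_iff, Set.mem_union, Set.mem_preimage,
          Set.mem_singleton_iff]
      rw [hset]
      exact hc0
    -- integral of the one-step factor
    have hYint_eq : ∀ i, ∫ ω, Real.exp (L * X i ω) ∂μ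
        = (1 - p) * Real.exp (L * α) + p * Real.exp (L * (-1)) := by
      intro i
      have hae : (fun ω => Real.exp (L * X i ω)) =ᵐ[μ]
          (fun ω => (X i ⁻¹' {α}).indicator (fun _ => Real.exp (L * α)) ω
            + (X i ⁻¹' {-1}).indicator (fun _ => Real.exp (L * (-1))) ω) := by
        filter_upwards [hXae i] with ω hω
        rcases hω with hω | hω
        · have h2 : ω ∉ X i ⁻¹' {-1} := by
            simp only [Set.mem_preimage, Set.mem_singleton_iff, hω]
            intro hcon; linarith
          simp [Set.indicator_apply, Set.mem_preimage, hω, h2]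
        · have h2 : ω ∉ X i ⁻¹' {α} := by
            simp only [Set.mem_preimage, Set.mem_singleton_iff, hω]
            intro hcon; linarith
          simp [Set.indicator_apply, Set.mem_preimage, hω, h2]
      rw [integral_congr_ae hae, integral_add
        ((integrable_const _).indicator ((hmeas i) (measurableSet_singleton _)))
        ((integrable_const _).indicator ((hmeas i) (measurableSet_singleton _))),
        integral_indicator ((hmeas i) (measurableSet_singleton _)),
        integral_indicator ((hmeas i) (measurableSet_singleton _)),
        setIntegral_const, setIntegral_const, measureReal_def, measureReal_def, hup, hdown,
        ENNReal.toReal_ofReal (by linarith : (0:ℝ) ≤ 1 - p), ENNReal.toReal_ofReal hp.le,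
        smul_eq_mul, smul_eq_mul]
    -- partial sums and the exponential supermartingale
    set S : ℕ → Ω → ℝ := fun n ω => ∑ i ∈ range n, X i ω with hSdef
    set M : ℕ → Ω → ℝ := fun n ω => Real.exp (L * S n ω) with hMdef
    set F : Filtration ℕ ‹MeasurableSpace Ω› :=
      ⟨fun n => ⨆ i ∈ Set.Iio n, MeasurableSpace.comap (X i) inferInstance,
        fun i j hij => biSup_mono fun k hk => lt_of_lt_of_le hk hij,
        fun n => iSup₂_le fun i _ => (hmeas i).comap_le⟩ with hFdef
    have hXF : ∀ i n, i < n → Measurable[F n] (X i) := fun i n hin =>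
      (Measurable.of_comap_le le_rfl).mono
        (le_iSup₂ (f := fun i (_ : i ∈ Set.Iio n) => MeasurableSpace.comap (X i) inferInstance)
          i hin) le_rfl
    have hSF : ∀ n, Measurable[F n] (S n) := fun n =>
      Finset.measurable_sum (range n) fun i hi => hXF i n (Finset.mem_range.1 hi)
    have hMF : StronglyAdapted F M := fun n =>
      (Real.measurable_exp.comp ((hSF n).const_mul L)).stronglyMeasurable
    have hSmeas : ∀ n, Measurable (S n) := fun n =>
      Finset.measurable_sum (range n) fun i _ => hmeas i
    have hMmeas : ∀ n, Measurable (M n) := fun n =>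
      Real.measurable_exp.comp ((hSmeas n).const_mul L)
    have hMpos : ∀ n ω, 0 < M n ω := fun n ω => Real.exp_pos _
    have habsX : ∀ i ω, (X i ω = α ∨ X i ω = -1) → |X i ω| ≤ α := by
      rintro i ω (h | h) <;> rw [h]
      · rw [abs_of_pos (by linarith)]
      · rw [abs_neg, abs_one]; linarith
    have hMbd : ∀ n, ∀ᵐ ω ∂μ, ‖M n ω‖ ≤ Real.exp (|L| * (n * α)) := by
      intro n
      filter_upwards [ae_all_iff.2 hXae] with ω hω
      have habs : |S n ω| ≤ n * α := by
        calc |S n ω| ≤ ∑ i ∈ range n, |X i ω| := Finset.abs_sum_le_sum_abs _ _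
          _ ≤ ∑ _i ∈ range n, α := Finset.sum_le_sum fun i _ => habsX i ω (hω i)
          _ = n * α := by rw [Finset.sum_const, Finset.card_range, nsmul_eq_mul]
      have hle : L * S n ω ≤ |L| * (n * α) :=
        calc L * S n ω ≤ |L * S n ω| := le_abs_self _
          _ = |L| * |S n ω| := abs_mul _ _
          _ ≤ |L| * (n * α) := mul_le_mul_of_nonneg_left habs (abs_nonneg L)
      rw [Real.norm_eq_abs, abs_of_pos (hMpos n ω)]
      exact Real.exp_le_exp.2 hle
    have hMint : ∀ n, Integrable (M n) μ := fun n =>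
      Integrable.mono' (integrable_const _) (hMmeas n).aestronglyMeasurable (hMbd n)
    have hYmeas : ∀ i, Measurable fun ω => Real.exp (L * X i ω) := fun i =>
      Real.measurable_exp.comp ((hmeas i).const_mul L)
    have hYbd : ∀ i, ∀ᵐ ω ∂μ, ‖Real.exp (L * X i ω)‖ ≤ Real.exp (|L| * α) := by
      intro i
      filter_upwards [hXae i] with ω hω
      rw [Real.norm_eq_abs, abs_of_pos (Real.exp_pos _)]
      refine Real.exp_le_exp.2 ?_
      calc L * X i ω ≤ |L * X i ω| := le_abs_self _
        _ = |L| * |X i ω| := abs_mul _ _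
        _ ≤ |L| * α := mul_le_mul_of_nonneg_left (habsX i ω hω) (abs_nonneg L)
    have hYint : ∀ i, Integrable (fun ω => Real.exp (L * X i ω)) μ := fun i =>
      Integrable.mono' (integrable_const _) (hYmeas i).aestronglyMeasurable (hYbd i)
    have hIndep : ∀ i, Indep (MeasurableSpace.comap (X i) inferInstance) (F i) μ := by
      intro i
      have hd : Disjoint ({i} : Set ℕ) (Set.Iio i) :=
        Set.disjoint_singleton_left.2 (by simp)
      have h := indep_iSup_of_disjoint (fun j => (hmeas j).comap_le) hindep.iIndep hd
      change Indep _ (⨆ j ∈ Set.Iio i, MeasurableSpace.comap (X j) inferInstance) μ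
      simpa using h
    have hsuper : Supermartingale M F μ := by
      refine supermartingale_nat hMF hMint fun i => ?_
      have hsplit : M (i + 1) = M i * fun ω => Real.exp (L * X i ω) := by
        funext ω
        simp only [hMdef, hSdef, Pi.mul_apply]
        rw [Finset.sum_range_succ, mul_add, Real.exp_add]
      have hpull : μ[M (i + 1)|F i] =ᵐ[μ] M i * μ[(fun ω => Real.exp (L * X i ω))|F i] := by
        rw [hsplit]
        exact condExp_stronglyMeasurable_mul_of_bound (F.le i) (hMF i) (hYint i)
          (Real.exp (|L| * (i * α))) (hMbd i)
      have hYsm : StronglyMeasurable[MeasurableSpace.comap (X i) inferInstance]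
          (fun ω => Real.exp (L * X i ω)) :=
        (Real.measurable_exp.comp ((Measurable.of_comap_le le_rfl).const_mul L)).stronglyMeasurable
      have hcond : μ[(fun ω => Real.exp (L * X i ω))|F i]
          =ᵐ[μ] fun _ => ∫ ω, Real.exp (L * X i ω) ∂μ :=
        condExp_indep_eq (hmeas i).comap_le (F.le i) hYsm (hIndep i)
      filter_upwards [hpull, hcond] with ω h1 h2
      rw [h1, Pi.mul_apply, h2, hYint_eq i]
      calc M i ω * ((1 - p) * Real.exp (L * α) + p * Real.exp (L * (-1)))
          ≤ M i ω * 1 := mul_le_mul_of_nonneg_left hstep_le (hMpos i ω).le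
        _ = M i ω := mul_one _
    -- conclusion via the maximal inequality
    set e : ℝ := Real.exp (L * (-(c * α))) with hedef
    have he : 0 < e := Real.exp_pos _
    have hM0 : ∫ ω, M 0 ω ∂μ = 1 := by
      have h0 : M 0 = fun _ => 1 := funext fun ω => by simp [hMdef, hSdef]
      rw [h0]
      simp
    have hofr : e⁻¹ = (p ^ α / (1 - p) ^ 2) ^ c := by
      rw [hedef, ← Real.exp_neg, (by ring : -(L * -(c * α)) = L * (c * α)), ← hrexp (c * α),
        (by ring : c * α = α * c), Real.rpow_mul hr0.le, hrα]
    have hBn : ∀ n : ℕ,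
        μ {ω | e ≤ (range (n + 1)).sup' nonempty_range_add_one fun k => M k ω}
          ≤ ENNReal.ofReal ((p ^ α / (1 - p) ^ 2) ^ c) := by
      intro n
      have h := ville_aux hsuper (fun n ω => (hMpos n ω).le) he n
      rw [hM0] at h
      have htr : (μ {ω | e ≤ (range (n + 1)).sup' nonempty_range_add_one fun k => M k ω}).toReal
          ≤ e⁻¹ := by
        rw [inv_eq_one_div, le_div_iff₀ he]
        linarith
      calc μ {ω | e ≤ (range (n + 1)).sup' nonempty_range_add_one fun k => M k ω}
          = ENNReal.ofReal (μ {ω | e ≤ (range (n + 1)).sup' nonempty_range_add_one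
              fun k => M k ω}).toReal := (ENNReal.ofReal_toReal (measure_ne_top _ _)).symm
        _ ≤ ENNReal.ofReal ((p ^ α / (1 - p) ^ 2) ^ c) :=
            ENNReal.ofReal_le_ofReal (by rw [← hofr]; exact htr)
    have hsub : {ω | ∃ t : ℕ, c * α + ∑ i ∈ range t, X i ω < 0}
        ⊆ ⋃ n : ℕ, {ω | e ≤ (range (n + 1)).sup' nonempty_range_add_one fun k => M k ω} := by
      rintro ω ⟨t, ht⟩
      refine Set.mem_iUnion.2 ⟨t, ?_⟩
      have hSt : S t ω ≤ -(c * α) := by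
        simp only [hSdef]
        linarith
      have hMt : e ≤ M t ω := by
        rw [hedef, hMdef]
        exact Real.exp_le_exp.2 (mul_le_mul_of_nonpos_left hSt hL.le)
      exact le_trans hMt (Finset.le_sup' (fun k => M k ω) (Finset.mem_range.2 (Nat.lt_succ_self t)))
    have hmono : Monotone fun n : ℕ =>
        {ω | e ≤ (range (n + 1)).sup' nonempty_range_add_one fun k => M k ω} := by
      intro a b hab ω hω
      exact le_trans hω (Finset.sup'_mono (fun k => M k ω)
        (Finset.range_subset_range.2 (Nat.add_le_add_right hab 1)) nonempty_range_add_one)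
    calc μ {ω | ∃ t : ℕ, c * α + ∑ i ∈ range t, X i ω < 0}
        ≤ μ (⋃ n : ℕ, {ω | e ≤ (range (n + 1)).sup' nonempty_range_add_one fun k => M k ω}) :=
          measure_mono hsub
      _ = ⨆ n : ℕ, μ {ω | e ≤ (range (n + 1)).sup' nonempty_range_add_one fun k => M k ω} :=
          hmono.directed_le.measure_iUnion
      _ ≤ ENNReal.ofReal ((p ^ α / (1 - p) ^ 2) ^ c) := iSup_le hBn
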